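/- Let α, γ > 0 and let G(x,y,p,q) be the 4×4 symmetric matrix with entries g_xx = g_yy = α/y², g_pp = γ(x²+y²)/y, g_qq = γ/y, g_pq = g_qp = γx/y, and all other entries zero (the balanced metric on the Siegel–Jacobi upper half-plane X₁^J). For (a,b,c,d) with ad − bc = 1 and (λ,μ) ∈ ℝ², define Φ : {(x,y,p,q) : y > 0} → ℝ⁴ by Φ(x,y,p,q) = (x₁,y₁,p₁,q₁) with Λ = (cx+d)² + (cy)², x₁ = ((ax+b)(cx+d)+acy²)/Λ, y₁ = y/Λ, p₁ = (λd − μc) + dp − cq, q₁ = (−λb + μa) − bp + aq. Then y₁ > 0 and for every P with y > 0: (DΦ(P))ᵀ · G(Φ(P)) · DΦ(P) = G(P), where DΦ(P) is the Jacobian matrix of Φ at P. That is, the balanced metric ds² = α(dx²+dy²)/y² + (γ/y)[(x²+y²)dp² + dq² + 2x dp dq] is invariant under the action of the reduced Jacobi group G^J(ℝ)₀. -/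

import Mathlib

open Matrix
set_option maxHeartbeats 2000000

/-- The Jacobian matrix of a map `Φ : ℝⁿ → ℝⁿ` at a point `P`. -/
noncomputable def jacobianMat {n : ℕ} (Φ : (Fin n → ℝ) → (Fin n → ℝ)) (P : Fin n → ℝ) :
    Matrix (Fin n) (Fin n) ℝ :=
  fun i j => fderiv ℝ (fun Q => Φ Q i) P (Pi.single j 1)

/-- The matrix of the balanced metric
`ds² = α(dx²+dy²)/y² + (γ/y)[(x²+y²)dp² + dq² + 2x dp dq]` on the Siegel–Jacobi
upper half-plane, in coordinates `P = (x,y,p,q)`. -/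
noncomputable def balG (α γ : ℝ) (P : Fin 4 → ℝ) : Matrix (Fin 4) (Fin 4) ℝ :=
  !![α / (P 1) ^ 2, 0, 0, 0;
     0, α / (P 1) ^ 2, 0, 0;
     0, 0, γ * ((P 0) ^ 2 + (P 1) ^ 2) / (P 1), γ * (P 0) / (P 1);
     0, 0, γ * (P 0) / (P 1), γ / (P 1)]

/-- The action of the element `(M,(λ,μ))` of the reduced Jacobi group `G^J(ℝ)₀`,
`M = [[a,b],[c,d]]`, on the Siegel–Jacobi upper half-plane in coordinates
`(x,y,p,q)`. -/
noncomputable def jPhi (a b c d l m : ℝ) (P : Fin 4 → ℝ) : Fin 4 → ℝ :=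
  ![((a * P 0 + b) * (c * P 0 + d) + a * c * (P 1) ^ 2) /
      ((c * P 0 + d) ^ 2 + (c * P 1) ^ 2),
    P 1 / ((c * P 0 + d) ^ 2 + (c * P 1) ^ 2),
    (l * d - m * c) + d * P 2 - c * P 3,
    (-(l * b) + m * a) - b * P 2 + a * P 3]

/-- The balanced metric on the Siegel–Jacobi upper half-plane `X₁^J` is invariant
under the action of the reduced Jacobi group `G^J(ℝ)₀`: for every point `P` with
`y > 0` the image point has `y₁ > 0` and `(DΦ(P))ᵀ · G(Φ(P)) · DΦ(P) = G(P)`. -/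
private lemma myInv {f : (Fin 4 → ℝ) → ℝ} {f' : (Fin 4 → ℝ) →L[ℝ] ℝ} {z : Fin 4 → ℝ}
    (hf : HasFDerivAt f f' z) (hz : f z ≠ 0) :
    HasFDerivAt (fun x => (f x)⁻¹) ((-(f z ^ 2)⁻¹) • f') z := by
  have h2 := (hasFDerivAt_inv hz).comp z hf
  refine h2.congr_fderiv ?_
  ext w
  simp [ContinuousLinearMap.smulRight_apply, mul_comm]

private lemma mySq {f : (Fin 4 → ℝ) → ℝ} {f' : (Fin 4 → ℝ) →L[ℝ] ℝ} {z : Fin 4 → ℝ}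
    (hf : HasFDerivAt f f' z) :
    HasFDerivAt (fun x => f x ^ 2) ((2 * f z) • f') z := by
  have h2 := hf.mul hf
  simp only [pow_two]
  refine h2.congr_fderiv ?_
  ext w
  simp
  ring

theorem balanced_metric_invariant (α γ a b c d l m : ℝ)
    (hα : 0 < α) (hγ : 0 < γ) (h : a * d - b * c = 1) :
    ∀ P : Fin 4 → ℝ, 0 < P 1 →
      0 < jPhi a b c d l m P 1 ∧
      (jacobianMat (jPhi a b c d l m) P)ᵀ * balG α γ (jPhi a b c d l m P) *
          jacobianMat (jPhi a b c d l m) P = balG α γ P := by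
  intro P hP
  have hv : P 1 ≠ 0 := ne_of_gt hP
  have hΛpos : 0 < (c * P 0 + d) ^ 2 + (c * P 1) ^ 2 := by
    rcases eq_or_ne c 0 with hc | hc
    · have hd : d ≠ 0 := by
        intro hd0
        rw [hc, hd0] at h
        norm_num at h
      have hd2 : 0 < d ^ 2 := pow_two_pos_of_ne_zero hd
      simp [hc]
      linarith
    · have h1 : 0 < (c * P 1) ^ 2 := pow_two_pos_of_ne_zero (mul_ne_zero hc hv)
      nlinarith [sq_nonneg (c * P 0 + d)]
  have hΛ : ((c * P 0 + d) ^ 2 + (c * P 1) ^ 2) ≠ 0 := ne_of_gt hΛpos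
  refine ⟨by simpa [jPhi] using div_pos hP hΛpos, ?_⟩
  have hΛ1 : (P 0 * c + d) ^ 2 + c ^ 2 * P 1 ^ 2 ≠ 0 := by convert hΛ using 1; ring
  have hΛ2 : (c * P 0 + d) ^ 2 + c ^ 2 * P 1 ^ 2 ≠ 0 := by convert hΛ using 1; ring
  -- basic coordinate derivatives
  have hu : HasFDerivAt (fun Q : Fin 4 → ℝ => Q 0) (ContinuousLinearMap.proj (R := ℝ) (φ := fun _ : Fin 4 => ℝ) 0) P :=
    hasFDerivAt_apply 0 P
  have hv1 : HasFDerivAt (fun Q : Fin 4 → ℝ => Q 1) (ContinuousLinearMap.proj (R := ℝ) (φ := fun _ : Fin 4 => ℝ) 1) P :=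
    hasFDerivAt_apply 1 P
  have hp2 : HasFDerivAt (fun Q : Fin 4 → ℝ => Q 2) (ContinuousLinearMap.proj (R := ℝ) (φ := fun _ : Fin 4 => ℝ) 2) P :=
    hasFDerivAt_apply 2 P
  have hq3 : HasFDerivAt (fun Q : Fin 4 → ℝ => Q 3) (ContinuousLinearMap.proj (R := ℝ) (φ := fun _ : Fin 4 => ℝ) 3) P :=
    hasFDerivAt_apply 3 P
  have hA := (hu.const_mul c).add_const d
  have hB := (hu.const_mul a).add_const b
  have hN := (hB.mul hA).add ((mySq hv1).const_mul (a * c))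
  have hden := (mySq hA).add (mySq (hv1.const_mul c))
  have hf0 := hN.mul (myInv hden hΛ)
  have hf1 := hv1.mul (myInv hden hΛ)
  have hf2 := ((hp2.const_mul d).const_add (l * d - m * c)).sub (hq3.const_mul c)
  have hf3 := ((hp2.const_mul b).const_sub (-(l * b) + m * a)).add (hq3.const_mul a)
  have hF0 : (fun Q : Fin 4 → ℝ => jPhi a b c d l m Q 0) =
      (fun Q : Fin 4 → ℝ => ((a * Q 0 + b) * (c * Q 0 + d) + a * c * Q 1 ^ 2) *
        ((c * Q 0 + d) ^ 2 + (c * Q 1) ^ 2)⁻¹) := by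
    funext Q; simp [jPhi, div_eq_mul_inv]
  have hF1 : (fun Q : Fin 4 → ℝ => jPhi a b c d l m Q 1) =
      (fun Q : Fin 4 → ℝ => Q 1 * ((c * Q 0 + d) ^ 2 + (c * Q 1) ^ 2)⁻¹) := by
    funext Q; simp [jPhi, div_eq_mul_inv]
  have hF2 : (fun Q : Fin 4 → ℝ => jPhi a b c d l m Q 2) =
      (fun Q : Fin 4 → ℝ => (l * d - m * c) + d * Q 2 - c * Q 3) := by
    funext Q; simp [jPhi]
  have hF3 : (fun Q : Fin 4 → ℝ => jPhi a b c d l m Q 3) =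
      (fun Q : Fin 4 → ℝ => (-(l * b) + m * a) - b * Q 2 + a * Q 3) := by
    funext Q; simp [jPhi]
  have hd0 : HasFDerivAt (fun Q : Fin 4 → ℝ => jPhi a b c d l m Q 0) _ P := hF0 ▸ (show HasFDerivAt (fun Q : Fin 4 → ℝ => ((a * Q 0 + b) * (c * Q 0 + d) + a * c * Q 1 ^ 2) * ((c * Q 0 + d) ^ 2 + (c * Q 1) ^ 2)⁻¹) _ P from hf0)
  have hd1 : HasFDerivAt (fun Q : Fin 4 → ℝ => jPhi a b c d l m Q 1) _ P := hF1 ▸ (show HasFDerivAt (fun Q : Fin 4 → ℝ => Q 1 * ((c * Q 0 + d) ^ 2 + (c * Q 1) ^ 2)⁻¹) _ P from hf1)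
  have hd2 : HasFDerivAt (fun Q : Fin 4 → ℝ => jPhi a b c d l m Q 2) _ P := hF2 ▸ (show HasFDerivAt (fun Q : Fin 4 → ℝ => (l * d - m * c) + d * Q 2 - c * Q 3) _ P from hf2)
  have hd3 : HasFDerivAt (fun Q : Fin 4 → ℝ => jPhi a b c d l m Q 3) _ P := hF3 ▸ (show HasFDerivAt (fun Q : Fin 4 → ℝ => (-(l * b) + m * a) - b * Q 2 + a * Q 3) _ P from hf3)
  have e00 : jacobianMat (jPhi a b c d l m) P 0 0 =
      ((c * P 0 + d) ^ 2 - (c * P 1) ^ 2) / ((c * P 0 + d) ^ 2 + (c * P 1) ^ 2) ^ 2 := by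
    simp only [jacobianMat, hd0.fderiv]
    simp [Pi.single_apply]
    field_simp
    linear_combination ((P 0 * c + d) ^ 2 - c ^ 2 * P 1 ^ 2) * h
  have e01 : jacobianMat (jPhi a b c d l m) P 0 1 =
      2 * c * P 1 * (c * P 0 + d) / ((c * P 0 + d) ^ 2 + (c * P 1) ^ 2) ^ 2 := by
    simp only [jacobianMat, hd0.fderiv]
    simp [Pi.single_apply]
    field_simp
    linear_combination (c * (P 0 * c + d)) * h
  have e02 : jacobianMat (jPhi a b c d l m) P 0 2 = 0 := by
    simp only [jacobianMat, hd0.fderiv]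
    simp [Pi.single_apply]
  have e03 : jacobianMat (jPhi a b c d l m) P 0 3 = 0 := by
    simp only [jacobianMat, hd0.fderiv]
    simp [Pi.single_apply]
  have e10 : jacobianMat (jPhi a b c d l m) P 1 0 =
      -(2 * c * P 1 * (c * P 0 + d)) / ((c * P 0 + d) ^ 2 + (c * P 1) ^ 2) ^ 2 := by
    simp only [jacobianMat, hd1.fderiv]
    simp [Pi.single_apply]
    field_simp
  have e11 : jacobianMat (jPhi a b c d l m) P 1 1 =
      ((c * P 0 + d) ^ 2 - (c * P 1) ^ 2) / ((c * P 0 + d) ^ 2 + (c * P 1) ^ 2) ^ 2 := by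
    simp only [jacobianMat, hd1.fderiv]
    simp [Pi.single_apply]
    field_simp
    ring
  have e12 : jacobianMat (jPhi a b c d l m) P 1 2 = 0 := by
    simp only [jacobianMat, hd1.fderiv]
    simp [Pi.single_apply]
  have e13 : jacobianMat (jPhi a b c d l m) P 1 3 = 0 := by
    simp only [jacobianMat, hd1.fderiv]
    simp [Pi.single_apply]
  have e20 : jacobianMat (jPhi a b c d l m) P 2 0 = 0 := by
    simp only [jacobianMat, hd2.fderiv]
    simp [Pi.single_apply]
  have e21 : jacobianMat (jPhi a b c d l m) P 2 1 = 0 := by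
    simp only [jacobianMat, hd2.fderiv]
    simp [Pi.single_apply]
  have e22 : jacobianMat (jPhi a b c d l m) P 2 2 = d := by
    simp only [jacobianMat, hd2.fderiv]
    simp [Pi.single_apply]
  have e23 : jacobianMat (jPhi a b c d l m) P 2 3 = -c := by
    simp only [jacobianMat, hd2.fderiv]
    simp [Pi.single_apply]
  have e30 : jacobianMat (jPhi a b c d l m) P 3 0 = 0 := by
    simp only [jacobianMat, hd3.fderiv]
    simp [Pi.single_apply]
  have e31 : jacobianMat (jPhi a b c d l m) P 3 1 = 0 := by
    simp only [jacobianMat, hd3.fderiv]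
    simp [Pi.single_apply]
  have e32 : jacobianMat (jPhi a b c d l m) P 3 2 = -b := by
    simp only [jacobianMat, hd3.fderiv]
    simp [Pi.single_apply]
  have e33 : jacobianMat (jPhi a b c d l m) P 3 3 = a := by
    simp only [jacobianMat, hd3.fderiv]
    simp [Pi.single_apply]
  have KEY : jacobianMat (jPhi a b c d l m) P =
      !![((c * P 0 + d) ^ 2 - (c * P 1) ^ 2) / ((c * P 0 + d) ^ 2 + (c * P 1) ^ 2) ^ 2,
         2 * c * P 1 * (c * P 0 + d) / ((c * P 0 + d) ^ 2 + (c * P 1) ^ 2) ^ 2, 0, 0;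
         -(2 * c * P 1 * (c * P 0 + d)) / ((c * P 0 + d) ^ 2 + (c * P 1) ^ 2) ^ 2,
         ((c * P 0 + d) ^ 2 - (c * P 1) ^ 2) / ((c * P 0 + d) ^ 2 + (c * P 1) ^ 2) ^ 2, 0, 0;
         0, 0, d, -c;
         0, 0, -b, a] := by
    ext i j
    fin_cases i <;> fin_cases j <;>
      first
        | exact e00 | exact e01 | exact e02 | exact e03
        | exact e10 | exact e11 | exact e12 | exact e13
        | exact e20 | exact e21 | exact e22 | exact e23
        | exact e30 | exact e31 | exact e32 | exact e33
  rw [KEY]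
  ext i j
  fin_cases i <;> fin_cases j <;>
    simp [Matrix.mul_apply, Fin.sum_univ_four, balG, jPhi, Matrix.transpose_apply, Matrix.vecHead, Matrix.vecTail] <;>
    field_simp
  · ring
  · ring
  · ring
  · ring
  · linear_combination (a * d - b * c + 1) * (P 0 * (P 0 * c + d) + c * P 1 ^ 2) ^ 2 * h
  · linear_combination (a * d - b * c + 1) * (P 0 * (P 0 * c + d) + c * P 1 ^ 2) * (P 0 * c + d) * h
  · linear_combination (a * d - b * c + 1) * (P 0 * (P 0 * c + d) + c * P 1 ^ 2) * (P 0 * c + d) * h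
  · linear_combination (a * d - b * c + 1) * (P 0 * c + d) ^ 2 * h
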